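/- Let 𝓛 be the lower-triangular transformation matrix with entries 𝓛_{nm} = (ψ_n/(1 + 𝓔_n φ_n))_{n-m} (the (n-m)-th Taylor coefficient), so 𝓛_{nm} = 0 for m > n and 𝓛_{nn} = ψ_n(0) = ∏_{k=n}^∞ ρ_k > 0. Then the formal inverse matrix has entries 𝓛^{-1}_{nm} = (1/ψ_m)_{n-m}, i.e., for all n ≥ j: Σ_{m=j}^{n} 𝓛_{nm} (1/ψ_j)_{m-j} = δ_{nj}. -/

import Mathlib

open Complex ComplexConjugate Polynomial

/-- The column vectors `[𝓟_n^j; 𝓠_n^j]` of the ordered `2×2` matrix products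
`∏^←_{k=j}^{n-1} (1/ρ_k) [[z, conj a_k], [a_k z, 1]]` applied to `[0; 1]`;
the argument `m` stands for `n - j`. -/
noncomputable def schurPQ (a : ℕ → ℂ) (j : ℕ) : ℕ → Polynomial ℂ × Polynomial ℂ
  | 0 => (0, 1)
  | m + 1 =>
    let pq := schurPQ a j m
    let k := j + m
    (((Real.sqrt (1 - ‖a k‖ ^ 2) : ℝ) : ℂ)⁻¹ •
        (Polynomial.X * pq.1 + Polynomial.C (conj (a k)) * pq.2),
     ((Real.sqrt (1 - ‖a k‖ ^ 2) : ℝ) : ℂ)⁻¹ •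
        (Polynomial.C (a k) * Polynomial.X * pq.1 + pq.2))

/-- The rational functions `𝓔_n^j = 𝓟_n^j / 𝓠_n^j`; the argument `m` stands for `n - j`. -/
noncomputable def schurE (a : ℕ → ℂ) (j m : ℕ) (z : ℂ) : ℂ :=
  (schurPQ a j m).1.eval z / (schurPQ a j m).2.eval z

/-- The `k`-th Taylor coefficient at the origin. -/
noncomputable def taylorCoeff (g : ℂ → ℂ) (k : ℕ) : ℂ :=
  iteratedDeriv k g 0 / (Nat.factorial k : ℂ)

/-- The 1-dim power series with given coefficients. -/
noncomputable def ofCoeffs (c : ℕ → ℂ) : FormalMultilinearSeries ℂ ℂ ℂ :=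
  fun n => c n • ContinuousMultilinearMap.mkPiAlgebraFin ℂ n ℂ

lemma ofCoeffs_coeff (c : ℕ → ℂ) (n : ℕ) : (ofCoeffs c).coeff n = c n := by
  simp [ofCoeffs, FormalMultilinearSeries.coeff, List.prod_ofFn]

lemma taylorCoeff_eq_coeff {f : ℂ → ℂ} {p : FormalMultilinearSeries ℂ ℂ ℂ}
    (h : HasFPowerSeriesAt f p 0) (k : ℕ) : taylorCoeff f k = p.coeff k := by
  obtain ⟨r, hr⟩ := h
  have h1 : (k.factorial : ℂ) • p.coeff k = iteratedDeriv k f 0 := by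
    rw [iteratedDeriv_eq_iteratedFDeriv, ← hr.factorial_smul (1 : ℂ) k]
    rw [FormalMultilinearSeries.coeff, ← Nat.cast_smul_eq_nsmul ℂ]
    rfl
  rw [taylorCoeff, ← h1, smul_eq_mul, mul_div_assoc]
  rw [mul_comm, div_mul_cancel₀]
  exact Nat.cast_ne_zero.mpr k.factorial_ne_zero


lemma taylorCoeff_congr {f g : ℂ → ℂ} (h : f =ᶠ[nhds 0] g) (k : ℕ) :
    taylorCoeff f k = taylorCoeff g k := by
  rw [taylorCoeff, taylorCoeff, h.iteratedDeriv_eq]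

lemma taylorCoeff_zero_eq (f : ℂ → ℂ) : taylorCoeff f 0 = f 0 := by
  simp [taylorCoeff]

lemma hasSum_poly (P : Polynomial ℂ) (z : ℂ) :
    HasSum (fun n => z ^ n • P.coeff n) (P.eval z) := by
  have h : ∀ n ∉ Finset.range (P.natDegree + 1), z ^ n • P.coeff n = 0 := by
    intro n hn
    rw [Finset.mem_range, not_lt] at hn
    rw [P.coeff_eq_zero_of_natDegree_lt hn, smul_zero]
  have : HasSum (fun n => z ^ n • P.coeff n) (∑ n ∈ Finset.range (P.natDegree + 1), z ^ n • P.coeff n) :=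
    hasSum_sum_of_ne_finset_zero h
  convert this using 1
  rw [Polynomial.eval_eq_sum_range]
  exact Finset.sum_congr rfl fun i _ => by rw [smul_eq_mul, mul_comm]

lemma taylorCoeff_polynomial (P : Polynomial ℂ) (k : ℕ) :
    taylorCoeff (fun z => P.eval z) k = P.coeff k := by
  have h : HasFPowerSeriesAt (fun z => P.eval z) (ofCoeffs P.coeff) 0 := by
    rw [hasFPowerSeriesAt_iff]
    filter_upwards with z
    simpa [ofCoeffs_coeff] using hasSum_poly P z
  rw [taylorCoeff_eq_coeff h, ofCoeffs_coeff]

/-- Cauchy product for Taylor coefficients. -/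
lemma taylorCoeff_mul {g h : ℂ → ℂ} (hg : AnalyticAt ℂ g 0) (hh : AnalyticAt ℂ h 0) (K : ℕ) :
    taylorCoeff (fun z => g z * h z) K
      = ∑ i ∈ Finset.range (K + 1), taylorCoeff g i * taylorCoeff h (K - i) := by
  obtain ⟨p, hp⟩ := hg
  obtain ⟨q, hq⟩ := hh
  have hpr : 0 < p.radius := hp.radius_pos
  have hqr : 0 < q.radius := hq.radius_pos
  set c : ℕ → ℂ := fun K => ∑ i ∈ Finset.range (K + 1), p.coeff i * q.coeff (K - i) with hc
  have hmul : HasFPowerSeriesAt (fun z => g z * h z) (ofCoeffs c) 0 := by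
    rw [hasFPowerSeriesAt_iff]
    have h1 := hasFPowerSeriesAt_iff.mp hp
    have h2 := hasFPowerSeriesAt_iff.mp hq
    filter_upwards [h1, h2, EMetric.ball_mem_nhds (0:ℂ) hpr, EMetric.ball_mem_nhds (0:ℂ) hqr]
      with z hz1 hz2 hz3 hz4
    have ha : Summable fun n => ‖p.coeff n * z ^ n‖ := by
      have := p.summable_norm_apply hz3
      simpa [FormalMultilinearSeries.apply_eq_pow_smul_coeff, smul_eq_mul, mul_comm] using this
    have hb : Summable fun n => ‖q.coeff n * z ^ n‖ := by
      have := q.summable_norm_apply hz4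
      simpa [FormalMultilinearSeries.apply_eq_pow_smul_coeff, smul_eq_mul, mul_comm] using this
    have hs := hasSum_sum_range_mul_of_summable_norm ha hb
    have e1 : (∑' n, p.coeff n * z ^ n) = g z := by
      have : HasSum (fun n => p.coeff n * z ^ n) (g (0 + z)) := by
        simpa [smul_eq_mul, mul_comm] using hz1
      rw [this.tsum_eq, zero_add]
    have e2 : (∑' n, q.coeff n * z ^ n) = h z := by
      have : HasSum (fun n => q.coeff n * z ^ n) (h (0 + z)) := by
        simpa [smul_eq_mul, mul_comm] using hz2
      rw [this.tsum_eq, zero_add]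
    rw [e1, e2] at hs
    have : (fun n => ∑ k ∈ Finset.range (n + 1), p.coeff k * z ^ k * (q.coeff (n - k) * z ^ (n - k)))
        = fun n => z ^ n • (ofCoeffs c).coeff n := by
      funext n
      rw [ofCoeffs_coeff, hc, smul_eq_mul, Finset.mul_sum, Finset.sum_congr rfl]
      intro i hi
      rw [Finset.mem_range, Nat.lt_succ_iff] at hi
      have : z ^ n = z ^ i * z ^ (n - i) := by rw [← pow_add, Nat.add_sub_cancel' hi]
      rw [this]; ring
    rw [this] at hs
    simpa using hs
  rw [taylorCoeff_eq_coeff hmul, ofCoeffs_coeff, hc]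
  exact Finset.sum_congr rfl fun i _ => by
    rw [taylorCoeff_eq_coeff hp, taylorCoeff_eq_coeff hq]

/-- Taylor coefficient `d` of `Q(z) - z^{d+1} h(z)` is the `d`-th coefficient of `Q`. -/
lemma taylorCoeff_poly_sub_shift {h : ℂ → ℂ} (hh : AnalyticAt ℂ h 0) (Q : Polynomial ℂ) (d : ℕ) :
    taylorCoeff (fun z => Q.eval z - z ^ (d + 1) * h z) d = Q.coeff d := by
  obtain ⟨q, hq⟩ := hh
  set c : ℕ → ℂ := fun K => Q.coeff K - (if d + 1 ≤ K then q.coeff (K - (d + 1)) else 0) with hc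
  have hF : HasFPowerSeriesAt (fun z => Q.eval z - z ^ (d + 1) * h z) (ofCoeffs c) 0 := by
    rw [hasFPowerSeriesAt_iff]
    filter_upwards [hasFPowerSeriesAt_iff.mp hq] with z hz
    have h1 : HasSum (fun n => z ^ (n + (d + 1)) • q.coeff n) (z ^ (d + 1) * h z) := by
      have := hz.mul_left (z ^ (d + 1))
      rw [zero_add] at this
      convert this using 2 with n
      · rfl
      · rw [smul_eq_mul, smul_eq_mul, pow_add]; ring
    set F : ℕ → ℂ := fun K => z ^ K • (if d + 1 ≤ K then q.coeff (K - (d + 1)) else 0) with hFdef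
    have h2 : HasSum F (z ^ (d + 1) * h z) := by
      have hinj : Function.Injective (fun n : ℕ => n + (d + 1)) := fun a b hab => by simpa using hab
      rw [← Function.Injective.hasSum_iff hinj]
      · convert h1 using 1
        funext n
        simp only [hFdef, Function.comp]
        rw [if_pos (by omega : d + 1 ≤ n + (d + 1))]
        congr 2
        omega
      · intro x hx
        simp only [Set.mem_range, not_exists] at hx
        have : ¬ (d + 1 ≤ x) := by
          intro hle
          exact hx (x - (d + 1)) (by omega)
        simp [hFdef, show ¬ d < x by omega]
    have h3 := (hasSum_poly Q z).sub h2
    rw [zero_add]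
    convert h3 using 1
    funext K
    simp only [ofCoeffs_coeff, hc, hFdef, smul_eq_mul]
    ring
  rw [taylorCoeff_eq_coeff hF, ofCoeffs_coeff, hc]
  simp


lemma schurPQ_succ (a : ℕ → ℂ) (j m : ℕ) :
    schurPQ a j (m + 1) =
      (((Real.sqrt (1 - ‖a (j + m)‖ ^ 2) : ℝ) : ℂ)⁻¹ •
        (Polynomial.X * (schurPQ a j m).1 + Polynomial.C (conj (a (j + m))) * (schurPQ a j m).2),
       ((Real.sqrt (1 - ‖a (j + m)‖ ^ 2) : ℝ) : ℂ)⁻¹ •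
        (Polynomial.C (a (j + m)) * Polynomial.X * (schurPQ a j m).1 + (schurPQ a j m).2)) := rfl

lemma rho_pos {x : ℂ} (hx : ‖x‖ < 1) : 0 < Real.sqrt (1 - ‖x‖ ^ 2) := by
  apply Real.sqrt_pos.mpr
  nlinarith [norm_nonneg x]

lemma rho_ne_zero {x : ℂ} (hx : ‖x‖ < 1) : (((Real.sqrt (1 - ‖x‖ ^ 2) : ℝ)) : ℂ) ≠ 0 := by
  exact_mod_cast (rho_pos hx).ne'

lemma rho_sq {x : ℂ} (hx : ‖x‖ < 1) :
    (((Real.sqrt (1 - ‖x‖ ^ 2) : ℝ)) : ℂ) ^ 2 = 1 - conj x * x := by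
  have h0 : (0:ℝ) ≤ 1 - ‖x‖ ^ 2 := by nlinarith [norm_nonneg x]
  have h1 : conj x * x = ((‖x‖ ^ 2 : ℝ) : ℂ) := by
    rw [mul_comm, Complex.mul_conj, Complex.normSq_eq_norm_sq]
  rw [h1, ← Complex.ofReal_pow, Real.sq_sqrt h0]
  push_cast; ring

/-- Degree bounds. -/
lemma schurPQ_natDegree (a : ℕ → ℂ) (j : ℕ) :
    ∀ d, (schurPQ a j (d + 1)).1.natDegree ≤ d ∧ (schurPQ a j (d + 1)).2.natDegree ≤ d := by
  intro d
  induction d with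
  | zero =>
    rw [schurPQ_succ]
    refine ⟨(natDegree_smul_le _ _).trans ?_, (natDegree_smul_le _ _).trans ?_⟩ <;>
      · show Polynomial.natDegree _ ≤ 0
        simp [schurPQ]
  | succ d ih =>
    rw [schurPQ_succ]
    constructor
    · refine (natDegree_smul_le _ _).trans ((natDegree_add_le _ _).trans ?_)
      simp only [max_le_iff]
      constructor
      · refine (natDegree_mul_le).trans ?_
        have := ih.1
        simp only [natDegree_X]
        omega
      · refine (natDegree_mul_le).trans ?_
        have := ih.2
        simp only [natDegree_C]
        omega
    · refine (natDegree_smul_le _ _).trans ((natDegree_add_le _ _).trans ?_)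
      simp only [max_le_iff]
      constructor
      · refine (natDegree_mul_le).trans ?_
        have h1 : (Polynomial.C (a (j + (d+1))) * Polynomial.X).natDegree ≤ 1 :=
          natDegree_mul_le.trans (by simp)
        have := ih.1
        omega
      · exact ih.2.trans (Nat.le_succ d)

lemma schurPQ_Q_eval_zero_ne (a : ℕ → ℂ) (ha : ∀ k, ‖a k‖ < 1) (j : ℕ) :
    ∀ d, (schurPQ a j d).2.eval 0 ≠ 0 := by
  intro d
  induction d with
  | zero => simp [schurPQ]
  | succ d ih =>
    rw [schurPQ_succ]
    simp only [Polynomial.eval_smul, Polynomial.eval_add, Polynomial.eval_mul,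
      Polynomial.eval_C, Polynomial.eval_X, mul_zero, zero_mul, zero_add, smul_eq_mul]
    exact mul_ne_zero (inv_ne_zero (rho_ne_zero (ha (j + d)))) ih

/-- The determinant identity. -/
lemma schurPQ_det (a : ℕ → ℂ) (ha : ∀ k, ‖a k‖ < 1) (j : ℕ) : ∀ d,
    (schurPQ a 0 (j + d)).1 * (schurPQ a j d).2 - (schurPQ a j d).1 * (schurPQ a 0 (j + d)).2
      = Polynomial.X ^ d * (schurPQ a 0 j).1 := by
  intro d
  induction d with
  | zero => simp [schurPQ]
  | succ d ih =>
    have hse : j + (d + 1) = (j + d) + 1 := by omega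
    rw [hse, schurPQ_succ, schurPQ_succ]
    have hk : 0 + (j + d) = j + d := by omega
    rw [hk]
    set r : ℂ := ((Real.sqrt (1 - ‖a (j + d)‖ ^ 2) : ℝ) : ℂ) with hr
    set α : ℂ := a (j + d)
    have hrne : r ≠ 0 := rho_ne_zero (ha (j + d))
    have hr2 : (Polynomial.C r) * (Polynomial.C r)
        = 1 - Polynomial.C (conj α) * Polynomial.C α := by
      rw [← Polynomial.C_mul, ← Polynomial.C_mul, ← sq, rho_sq (ha (j + d))]
      simp
      rfl
    have hinv : (Polynomial.C r⁻¹) * (Polynomial.C r) = 1 := by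
      rw [← Polynomial.C_mul, inv_mul_cancel₀ hrne]; simp
    set P0 := (schurPQ a 0 (j + d)).1
    set Q0 := (schurPQ a 0 (j + d)).2
    set Pj := (schurPQ a j d).1
    set Qj := (schurPQ a j d).2
    simp only [smul_eq_C_mul]
    have key : Polynomial.C r⁻¹ * (Polynomial.X * P0 + Polynomial.C (conj α) * Q0) *
          (Polynomial.C r⁻¹ * (Polynomial.C α * Polynomial.X * Pj + Qj)) -
        Polynomial.C r⁻¹ * (Polynomial.X * Pj + Polynomial.C (conj α) * Qj) *
          (Polynomial.C r⁻¹ * (Polynomial.C α * Polynomial.X * P0 + Q0)) =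
        (Polynomial.C r⁻¹ * Polynomial.C r⁻¹) *
          ((1 - Polynomial.C (conj α) * Polynomial.C α) *
            (Polynomial.X * (P0 * Qj - Pj * Q0))) := by ring
    rw [key, ← hr2]
    have : Polynomial.C r⁻¹ * Polynomial.C r⁻¹ * (Polynomial.C r * Polynomial.C r *
        (Polynomial.X * (P0 * Qj - Pj * Q0)))
        = (Polynomial.C r⁻¹ * Polynomial.C r) * ((Polynomial.C r⁻¹ * Polynomial.C r) *
          (Polynomial.X * (P0 * Qj - Pj * Q0))) := by ring
    rw [this, hinv, one_mul, one_mul, ih]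
    ring

lemma wall (f ψ : ℕ → ℂ → ℂ)
    (hfb : ∀ n, ∀ z ∈ Metric.ball (0 : ℂ) 1, ‖f n z‖ ≤ 1)
    (ha : ∀ n, ‖f n 0‖ < 1)
    (hrec : ∀ n, ∀ z ∈ Metric.ball (0 : ℂ) 1,
      f (n + 1) z * (z * (1 - conj (f n 0) * f n z)) = f n z - f n 0)
    (hψrec : ∀ n, ∀ z ∈ Metric.ball (0 : ℂ) 1,
      ψ (n + 1) z * (1 - conj (f n 0) * f n z) =
        ψ n z * ((Real.sqrt (1 - ‖f n 0‖ ^ 2) : ℝ) : ℂ))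
    (j : ℕ) : ∀ d, ∀ z ∈ Metric.ball (0 : ℂ) 1,
    ψ (j + d) z = ψ j z * ((schurPQ (fun i => f i 0) j d).2.eval z
      + (schurPQ (fun i => f i 0) j d).1.eval z * (z * f (j + d) z)) := by
  intro d
  induction d with
  | zero => intro z hz; simp [schurPQ]
  | succ d IH =>
    intro z hz
    set k := j + d with hk
    have hjd : j + (d + 1) = k + 1 := by omega
    set α : ℂ := f k 0 with hα
    set c : ℂ := conj α with hc
    set r : ℂ := ((Real.sqrt (1 - ‖f k 0‖ ^ 2) : ℝ) : ℂ) with hr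
    have hrne : r ≠ 0 := rho_ne_zero (ha k)
    have hr2 : r ^ 2 = 1 - c * α := rho_sq (ha k)
    have hD : (1 - c * f k z) ≠ 0 := by
      intro h0
      have h1 : c * f k z = 1 := by linear_combination -h0
      have h2 := congrArg norm h1
      rw [norm_mul, norm_one, hc, RCLike.norm_conj] at h2
      have h3 := hfb k z hz
      have h4 : ‖α‖ < 1 := ha k
      have h5 := norm_nonneg (f k z)
      nlinarith [mul_le_mul_of_nonneg_left h3 (norm_nonneg α)]
    have hΨ : ψ (k + 1) z * (1 - c * f k z) = ψ k z * r := hψrec k z hz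
    have hf1 : f (k + 1) z * (z * (1 - c * f k z)) = f k z - α := hrec k z hz
    have IHz := IH z hz
    rw [hjd, schurPQ_succ]
    have hax : (fun i => f i 0) (j + d) = α := rfl
    simp only [hax, Polynomial.eval_smul, smul_eq_mul, Polynomial.eval_add, Polynomial.eval_mul,
      Polynomial.eval_C, Polynomial.eval_X, ← hk, ← hc, ← hr]
    set p : ℂ := (schurPQ (fun i => f i 0) j d).1.eval z with hp
    set q : ℂ := (schurPQ (fun i => f i 0) j d).2.eval z with hq
    set F : ℂ := f k z with hF
    set G : ℂ := f (k + 1) z with hG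
    have stepA : ψ (k + 1) z * ((1 - c * F) * r)
        = (ψ j z * ((α * z * p + q) + (z * p + c * q) * (z * G))) * (1 - c * F) := by
      linear_combination r * hΨ + r ^ 2 * IHz - ψ j z * (z * p + c * q) * hf1
        + ψ j z * (q + p * (z * F)) * hr2
    have hA : ψ (k + 1) z * r = ψ j z * ((α * z * p + q) + (z * p + c * q) * (z * G)) := by
      apply mul_right_cancel₀ hD
      linear_combination stepA
    have : ψ j z * (r⁻¹ * (α * z * p + q) + r⁻¹ * (z * p + c * q) * (z * G))
        = r⁻¹ * (ψ (k + 1) z * r) := by rw [hA]; ring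
    rw [this, mul_comm, mul_assoc, mul_inv_cancel₀ hrne, mul_one]


theorem stmt16 (f ψ : ℕ → ℂ → ℂ)
    (hfa : ∀ n, DifferentiableOn ℂ (f n) (Metric.ball 0 1))
    (hfb : ∀ n, ∀ z ∈ Metric.ball (0 : ℂ) 1, ‖f n z‖ ≤ 1)
    (ha : ∀ n, ‖f n 0‖ < 1)
    (hrec : ∀ n, ∀ z ∈ Metric.ball (0 : ℂ) 1,
      f (n + 1) z * (z * (1 - conj (f n 0) * f n z)) = f n z - f n 0)
    (hψa : ∀ n, DifferentiableOn ℂ (ψ n) (Metric.ball 0 1))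
    (hψ0 : ∀ n, (ψ n 0).im = 0 ∧ 0 < (ψ n 0).re)
    (hψrec : ∀ n, ∀ z ∈ Metric.ball (0 : ℂ) 1,
      ψ (n + 1) z * (1 - conj (f n 0) * f n z) =
        ψ n z * ((Real.sqrt (1 - ‖f n 0‖ ^ 2) : ℝ) : ℂ))
    (L : ℕ → ℕ → ℂ)
    (hL : ∀ n m : ℕ, m ≤ n → L n m =
      taylorCoeff (fun z => ψ n z /
        (1 + schurE (fun i => f i 0) 0 n z * (z * f n z))) (n - m))
    (hL0 : ∀ n m : ℕ, n < m → L n m = 0) :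
    (∀ n, L n n = ψ n 0) ∧
    ∀ j n : ℕ, j ≤ n →
      ∑ m ∈ Finset.Icc j n, L n m * taylorCoeff (fun z => (ψ j z)⁻¹) (m - j) =
        if n = j then 1 else 0 := by
  set a : ℕ → ℂ := fun i => f i 0 with hadef
  constructor
  · intro n
    rw [hL n n le_rfl, Nat.sub_self, taylorCoeff_zero_eq]
    simp
  · intro j n hjn
    set d := n - j with hd
    have hn : n = j + d := by omega
    have hball : Metric.ball (0:ℂ) 1 ∈ nhds (0:ℂ) := Metric.ball_mem_nhds 0 one_pos
    have hfn : AnalyticAt ℂ (f n) 0 := (hfa n).analyticAt hball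
    have hψn : AnalyticAt ℂ (ψ n) 0 := (hψa n).analyticAt hball
    have hψj : AnalyticAt ℂ (ψ j) 0 := (hψa j).analyticAt hball
    have hψj0 : ψ j 0 ≠ 0 := by
      intro h
      have := (hψ0 j).2
      rw [h] at this
      simp at this
    set P0 := (schurPQ a 0 n).1 with hP0
    set Q0 := (schurPQ a 0 n).2 with hQ0
    set Pj := (schurPQ a j d).1 with hPj
    set Qj := (schurPQ a j d).2 with hQj
    set Pj0 := (schurPQ a 0 j).1 with hPj0
    have hQ0z0 : Q0.eval 0 ≠ 0 := schurPQ_Q_eval_zero_ne a ha 0 n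
    have hpolyA : ∀ P : Polynomial ℂ, AnalyticAt ℂ (fun z => P.eval z) 0 :=
      fun P => (P.differentiable).analyticAt 0
    have hwA : AnalyticAt ℂ (fun z => z * f n z) 0 :=
      analyticAt_id.mul hfn
    set den : ℂ → ℂ := fun z => Q0.eval z + P0.eval z * (z * f n z) with hdendef
    have hdenA : AnalyticAt ℂ den 0 := (hpolyA Q0).add ((hpolyA P0).mul hwA)
    have hden0 : den 0 ≠ 0 := by
      simpa [hdendef] using hQ0z0
    set Fψ : ℂ → ℂ := fun z => ψ n z / (1 + schurE a 0 n z * (z * f n z)) with hFψ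
    have hgA : AnalyticAt ℂ (fun z => 1 + schurE a 0 n z * (z * f n z)) 0 := by
      apply analyticAt_const.add
      exact (((hpolyA P0).div (hpolyA Q0) hQ0z0).mul hwA)
    have hg0 : (1 : ℂ) + schurE a 0 n 0 * (0 * f n 0) ≠ 0 := by simp
    have hFψA : AnalyticAt ℂ Fψ 0 := hψn.div hgA hg0
    have hinvA : AnalyticAt ℂ (fun z => (ψ j z)⁻¹) 0 := hψj.inv hψj0
    have hsum : ∑ m ∈ Finset.Icc j n, L n m * taylorCoeff (fun z => (ψ j z)⁻¹) (m - j)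
        = taylorCoeff (fun z => Fψ z * (ψ j z)⁻¹) d := by
      rw [taylorCoeff_mul hFψA hinvA d, ← Finset.Ico_add_one_right_eq_Icc, Finset.sum_Ico_eq_sum_range]
      have hnj1 : n + 1 - j = d + 1 := by omega
      rw [hnj1, ← Finset.sum_range_reflect]
      apply Finset.sum_congr rfl
      intro i hi
      rw [Finset.mem_range] at hi
      have e0 : d + 1 - 1 - i = d - i := by omega
      rw [e0, hL n (j + (d - i)) (by omega)]
      have e1 : n - (j + (d - i)) = i := by omega
      have e2 : j + (d - i) - j = d - i := by omega
      rw [e1, e2]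
    rw [hsum]
    set h : ℂ → ℂ := fun z => f n z * Pj0.eval z / den z with hhdef
    have hhA : AnalyticAt ℂ h 0 := (hfn.mul (hpolyA Pj0)).div hdenA hden0
    have hdet := schurPQ_det a ha j d
    rw [← hn] at hdet
    have heq : (fun z => Fψ z * (ψ j z)⁻¹) =ᶠ[nhds 0]
        (fun z => Qj.eval z - z ^ (d + 1) * h z) := by
      have hwall := wall f ψ hfb ha hrec hψrec j d
      filter_upwards [hball, hψj.continuousAt.eventually_ne hψj0,
        hdenA.continuousAt.eventually_ne hden0,
        (Q0.continuous.continuousAt).eventually_ne hQ0z0]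
        with z hz1 hz2 hz3 hz4
      have hwz : ψ n z = ψ j z * (Qj.eval z + Pj.eval z * (z * f n z)) := by
        have := hwall z hz1
        rwa [← hn] at this
      have hdetz : P0.eval z * Qj.eval z - Pj.eval z * Q0.eval z
          = z ^ d * Pj0.eval z := by
        have := congrArg (Polynomial.eval z) hdet
        simpa using this
      simp only [hFψ, hhdef, hdendef] at *
      have e1 : (1 : ℂ) + schurE a 0 n z * (z * f n z)
          = (Q0.eval z + P0.eval z * (z * f n z)) / Q0.eval z := by
        rw [schurE, ← hP0, ← hQ0, eq_div_iff hz4, add_mul, one_mul, mul_comm (P0.eval z / Q0.eval z),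
          mul_assoc, div_mul_cancel₀ _ hz4]
        ring
      rw [hwz, e1, div_div_eq_mul_div]
      have e3 : Qj.eval z - z ^ (d+1) * (f n z * Pj0.eval z / (Q0.eval z + P0.eval z * (z * f n z)))
          = (Qj.eval z * (Q0.eval z + P0.eval z * (z * f n z))
              - z ^ (d+1) * (f n z * Pj0.eval z)) / (Q0.eval z + P0.eval z * (z * f n z)) := by
        rw [eq_div_iff hz3, sub_mul, mul_assoc, div_mul_cancel₀ _ hz3]
      rw [e3]
      have e4 : ψ j z * (Qj.eval z + Pj.eval z * (z * f n z)) * Q0.eval z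
          / (Q0.eval z + P0.eval z * (z * f n z)) * (ψ j z)⁻¹
          = (Qj.eval z + Pj.eval z * (z * f n z)) * Q0.eval z
            / (Q0.eval z + P0.eval z * (z * f n z)) * (ψ j z * (ψ j z)⁻¹) := by
        ring
      rw [e4, mul_inv_cancel₀ hz2, mul_one, div_eq_div_iff hz3 hz3]
      linear_combination (-(z * f n z) * (Q0.eval z + P0.eval z * (z * f n z))) * hdetz
    rw [taylorCoeff_congr heq, taylorCoeff_poly_sub_shift hhA Qj d]
    by_cases hnj : n = j
    · have hd0 : d = 0 := by omega
      rw [if_pos hnj, hQj, hd0]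
      simp [schurPQ]
    · rw [if_neg hnj]
      have hd' : d - 1 + 1 = d := by omega
      have hdeg := (schurPQ_natDegree a j (d - 1)).2
      rw [hd'] at hdeg
      rw [← hQj] at hdeg
      exact Polynomial.coeff_eq_zero_of_natDegree_lt (by omega)
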